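/- Let α, β be commuting independent surjective endomorphisms of an abelian group H with finite kernels (ker αᵐ ∩ ker βⁿ = {1} for all m, n). Then the orbit of x under the semigroup generated by α and β satisfies orb_{α,β}(x) = ⋃_{y ∈ orb_α(x)} orb_β(y), where orb_{α,β}(x) = {y : ∃ n,m,s,t ∈ ℕ, αⁿβˢ(y) = αᵐβᵗ(x)}. -/

import Mathlib

private lemma stmt16_mem_ker {H : Type*} [CommGroup H] (f : Monoid.End H) (z : H) :
    z ∈ MonoidHom.ker f ↔ f z = 1 := Iff.rfl

private lemma stmt16_pow_surj {H : Type*} [CommGroup H] (α : Monoid.End H)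
    (hα : Function.Surjective α) (n : ℕ) : Function.Surjective (α ^ n) := by
  induction n with
  | zero => simpa [pow_zero] using Function.surjective_id
  | succ n ih => rw [pow_succ]; exact ih.comp hα

private lemma stmt16_ker_finite {H : Type*} [CommGroup H] (α : Monoid.End H)
    (hkα : Finite (MonoidHom.ker α)) (n : ℕ) :
    Finite (MonoidHom.ker (α ^ n)) := by
  induction n with
  | zero =>
    have : MonoidHom.ker ((α : Monoid.End H) ^ 0) = ⊥ := by
      ext z
      exact Iff.rfl
    erw [this]; infer_instance
  | succ n ih =>
    have hmap : ∀ z : H, z ∈ MonoidHom.ker (α ^ (n+1)) → α z ∈ MonoidHom.ker (α ^ n) := by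
      intro z hz
      rw [stmt16_mem_ker] at hz ⊢
      have h2 : (α ^ (n+1)) z = (α ^ n) (α z) := by rw [pow_succ]; rfl
      rw [← h2]; exact hz
    let g : MonoidHom.ker (α ^ (n+1)) →* MonoidHom.ker (α ^ n) :=
      { toFun := fun z => ⟨α z.1, hmap z.1 z.2⟩
        map_one' := by ext; simp
        map_mul' := by intro a b; ext; simp }
    haveI : Fintype (MonoidHom.ker (α ^ n)) := Fintype.ofFinite _
    haveI : Fintype (MonoidHom.ker g) := by
      haveI := Fintype.ofFinite (MonoidHom.ker α)
      refine Fintype.ofInjective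
        (fun z : MonoidHom.ker g => (⟨z.1.1, ?_⟩ : MonoidHom.ker α)) ?_
      · have hz := z.2
        rw [MonoidHom.mem_ker] at hz
        have : α z.1.1 = 1 := congrArg Subtype.val hz
        rwa [stmt16_mem_ker]
      · intro a b hab
        simp only [Subtype.mk.injEq] at hab
        exact Subtype.ext (Subtype.ext hab)
    exact @Finite.of_fintype _ (Group.fintypeOfKerOfCodom g)

/-- β^t maps ker(α^n) onto itself (injective endo of finite group). -/
private lemma stmt16_key {H : Type*} [CommGroup H] (α β : Monoid.End H)
    (hkα : Finite (MonoidHom.ker α)) (hc : α * β = β * α)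
    (hind : ∀ m n : ℕ, MonoidHom.ker (α ^ m) ⊓ MonoidHom.ker (β ^ n) = ⊥)
    (n t : ℕ) (k : H) (hk : k ∈ MonoidHom.ker (α ^ n)) :
    ∃ w ∈ MonoidHom.ker (α ^ n), (β ^ t) w = k := by
  have hcomm : (α ^ n) * (β ^ t) = (β ^ t) * (α ^ n) :=
    (Commute.pow_pow (hc : Commute α β) n t)
  have hmap : ∀ z : H, z ∈ MonoidHom.ker (α ^ n) → (β ^ t) z ∈ MonoidHom.ker (α ^ n) := by
    intro z hz
    rw [stmt16_mem_ker] at hz ⊢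
    have h3 : (α ^ n) ((β ^ t) z) = (β ^ t) ((α ^ n) z) := DFunLike.congr_fun hcomm z
    rw [h3, hz, map_one]
  haveI : Finite (MonoidHom.ker (α ^ n)) := stmt16_ker_finite α hkα n
  let e : MonoidHom.ker (α ^ n) → MonoidHom.ker (α ^ n) :=
    fun z => ⟨(β ^ t) z.1, hmap z.1 z.2⟩
  have hinj : Function.Injective e := by
    intro a b hab
    have h1 : (β ^ t) a.1 = (β ^ t) b.1 := congrArg Subtype.val hab
    have h2 : a.1 * b.1⁻¹ ∈ MonoidHom.ker (α ^ n) ⊓ MonoidHom.ker (β ^ t) := by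
      refine Subgroup.mem_inf.mpr ⟨mul_mem a.2 (inv_mem b.2), ?_⟩
      rw [stmt16_mem_ker, map_mul, map_inv, h1, mul_inv_cancel]
    rw [hind n t, Subgroup.mem_bot] at h2
    exact Subtype.ext (mul_inv_eq_one.mp h2)
  have hsurj : Function.Surjective e := Finite.surjective_of_injective hinj
  obtain ⟨w, hw⟩ := hsurj ⟨k, hk⟩
  exact ⟨w.1, w.2, congrArg Subtype.val hw⟩

theorem stmt16 {H : Type*} [CommGroup H] (α β : Monoid.End H)
    (hα : Function.Surjective α) (hβ : Function.Surjective β)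
    (hkα : Finite (MonoidHom.ker α)) (hkβ : Finite (MonoidHom.ker β))
    (hc : α * β = β * α)
    (hind : ∀ m n : ℕ, MonoidHom.ker (α ^ m) ⊓ MonoidHom.ker (β ^ n) = ⊥)
    (x : H) :
    {y : H | ∃ n m s t : ℕ, (α ^ n) ((β ^ s) y) = (α ^ m) ((β ^ t) x)} =
      ⋃ y ∈ {y : H | ∃ n m : ℕ, (α ^ n) y = (α ^ m) x},
        {w : H | ∃ s t : ℕ, (β ^ s) w = (β ^ t) y} := by
  have hcomm : ∀ n t : ℕ, ∀ z : H, (α ^ n) ((β ^ t) z) = (β ^ t) ((α ^ n) z) := by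
    intro n t z
    exact DFunLike.congr_fun (Commute.pow_pow (hc : Commute α β) n t) z
  ext y
  simp only [Set.mem_setOf_eq, Set.mem_iUnion, exists_prop]
  constructor
  · rintro ⟨n, m, s, t, h⟩
    obtain ⟨z, hz⟩ := stmt16_pow_surj α hα n ((α ^ m) x)
    have hk : (β ^ s) y * ((β ^ t) z)⁻¹ ∈ MonoidHom.ker (α ^ n) := by
      rw [stmt16_mem_ker, map_mul, map_inv, h, hcomm n t z, hz, hcomm m t x,
        mul_inv_cancel]
    obtain ⟨w, hw, hbw⟩ := stmt16_key α β hkα hc hind n t _ hk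
    refine ⟨z * w, ⟨n, m, ?_⟩, s, t, ?_⟩
    · rw [map_mul, hz]
      rw [stmt16_mem_ker] at hw
      rw [hw, mul_one]
    · rw [map_mul, hbw, mul_comm ((β ^ t) z), mul_assoc, inv_mul_cancel, mul_one]
  · rintro ⟨z, ⟨n, m, hz⟩, s, t, hw⟩
    refine ⟨n, m, s, t, ?_⟩
    rw [hw, hcomm n t z, hz, hcomm m t x]
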